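/- Let n ≥ 3, τ ≥ 1, T ⊆ [-1,1), h : ℝ → ℝ, and let f be a real polynomial of degree at most τ with f(t) ≤ h(t) for every t ∈ [-1,1] \ T. Then for every finite T-avoiding spherical τ-design C ⊆ S^{n-1} (with |C| ≥ 2), one has E^h(C) ≥ f₀·|C| − f(1). -/

import Mathlib

open MeasureTheory Finset
open scoped Classical

/-- The normalized surface measure on the unit sphere of `EuclideanSpace ℝ (Fin n)`. -/
noncomputable def normSphereMeasure (n : ℕ) :
    Measure (Metric.sphere (0 : EuclideanSpace ℝ (Fin n)) 1) :=
  ((volume : Measure (EuclideanSpace ℝ (Fin n))).toSphere Set.univ)⁻¹ •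
    (volume : Measure (EuclideanSpace ℝ (Fin n))).toSphere

/-- `C` is a spherical `τ`-design: every polynomial in `n` variables of total degree at
most `τ` has average over `C` equal to its average over the sphere. -/
def IsSphericalDesign (n τ : ℕ) (C : Finset (EuclideanSpace ℝ (Fin n))) : Prop :=
  ∀ p : MvPolynomial (Fin n) ℝ, p.totalDegree ≤ τ →
    (1 / (C.card : ℝ)) * ∑ x ∈ C, MvPolynomial.eval (fun i => x i) p =
      ∫ x, MvPolynomial.eval (fun i => (x : EuclideanSpace ℝ (Fin n)) i) p
        ∂(normSphereMeasure n)

/-- The discrete `h`-energy of a code `C`. -/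
noncomputable def energy (n : ℕ) (h : ℝ → ℝ) (C : Finset (EuclideanSpace ℝ (Fin n))) : ℝ :=
  (1 / (C.card : ℝ)) *
    ∑ x ∈ C, ∑ y ∈ C, if x ≠ y then h (inner ℝ x y : ℝ) else 0

/-- The zeroth Gegenbauer coefficient (mean value) of a polynomial `f` in dimension `n`. -/
noncomputable def gegenbauerZero (n : ℕ) (f : Polynomial ℝ) : ℝ :=
  (Real.Gamma ((n : ℝ) / 2) / (Real.sqrt Real.pi * Real.Gamma (((n : ℝ) - 1) / 2))) *
    ∫ t in (-1 : ℝ)..1, f.eval t * (1 - t ^ 2) ^ (((n : ℝ) - 3) / 2)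

section Aux

open Set Metric Real

lemma gaussJ (a : ℕ) : ∫ r in Ioi (0:ℝ), r ^ a * Real.exp (-r ^ 2) =
    Real.Gamma (((a:ℝ) + 1) / 2) / 2 := by
  have hq : (-1:ℝ) < (a:ℝ) := lt_of_lt_of_le (by norm_num) (Nat.cast_nonneg a)
  have h := integral_rpow_mul_exp_neg_rpow (p := 2) (q := (a : ℝ)) two_pos hq
  calc ∫ r in Ioi (0:ℝ), r ^ a * Real.exp (-r ^ 2)
      = ∫ r in Ioi (0:ℝ), r ^ (a:ℝ) * Real.exp (-r ^ (2:ℝ)) := by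
        refine setIntegral_congr_fun measurableSet_Ioi fun x _ => ?_
        rw [Real.rpow_natCast]
        norm_num [show ((2:ℝ):ℝ) = ((2:ℕ):ℝ) by norm_num, Real.rpow_natCast x 2]
    _ = (1 / 2) * Real.Gamma (((a:ℝ) + 1) / 2) := h
    _ = _ := by ring

lemma gaussAbs (m : ℕ) : ∫ x : ℝ, |x| ^ m * Real.exp (-x ^ 2) =
    Real.Gamma (((m:ℝ) + 1) / 2) := by
  have h : ∀ x : ℝ, |x| ^ m * Real.exp (-x ^ 2) = (fun t => t ^ m * Real.exp (-t ^ 2)) |x| := by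
    intro x; simp [sq_abs]
  calc ∫ x : ℝ, |x| ^ m * Real.exp (-x ^ 2)
      = ∫ x : ℝ, (fun t => t ^ m * Real.exp (-t ^ 2)) |x| := by simp_rw [h]
    _ = 2 * ∫ x in Ioi (0:ℝ), x ^ m * Real.exp (-x ^ 2) :=
        integral_comp_abs (f := fun t => t ^ m * Real.exp (-t ^ 2))
    _ = _ := by rw [gaussJ]; ring

lemma contF (k : ℕ) {β : ℝ} (hβ : 0 ≤ β) :
    Continuous (fun t : ℝ => t ^ k * (1 - t ^ 2) ^ β) :=
  (continuous_pow k).mul ((continuous_const.sub (continuous_pow 2)).rpow_const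
    (fun _ => Or.inr hβ))

lemma intervalMoment (n k : ℕ) (hn : 3 ≤ n) :
    ∫ t in (-1:ℝ)..1, t ^ k * (1 - t ^ 2) ^ (((n:ℝ) - 3) / 2) =
      (∫ x : ℝ, x ^ k * Real.exp (-x ^ 2)) * Real.Gamma (((n:ℝ) - 1) / 2)
        / Real.Gamma (((n:ℝ) + k) / 2) := by
  set β : ℝ := ((n:ℝ) - 3) / 2 with hβdef
  have hβ : 0 ≤ β := by
    have : (3:ℝ) ≤ n := by exact_mod_cast hn
    simp only [hβdef]; linarith
  set F : ℝ → ℝ := fun t => t ^ k * (1 - t ^ 2) ^ β with hF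
  have hFc : Continuous F := contF k hβ
  set j : ℝ := ∫ t in (-1:ℝ)..1, F t with hj
  -- step 1 : Fubini
  have fub : (∫ p : ℝ × ℝ, (p.1 ^ k * Real.exp (-p.1 ^ 2)) *
      (|p.2| ^ (n-2) * Real.exp (-p.2 ^ 2))) =
      (∫ x : ℝ, x ^ k * Real.exp (-x ^ 2)) * Real.Gamma (((n:ℝ) - 1) / 2) := by
    rw [Measure.volume_eq_prod, integral_prod_mul (f := fun s : ℝ => s ^ k * Real.exp (-s ^ 2))
      (g := fun v : ℝ => |v| ^ (n-2) * Real.exp (-v ^ 2)), gaussAbs]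
    congr 2
    rw [Nat.cast_sub (by omega)]
    push_cast
    ring
  -- step 2 : polar coordinates
  have pol : (∫ p : ℝ × ℝ, (p.1 ^ k * Real.exp (-p.1 ^ 2)) *
      (|p.2| ^ (n-2) * Real.exp (-p.2 ^ 2))) =
      (Real.Gamma (((n:ℝ) + k) / 2) / 2) *
        ∫ θ in Ioo (-π) π, (Real.cos θ) ^ k * |Real.sin θ| ^ (n-2) := by
    rw [← integral_comp_polarCoord_symm]
    have hset : polarCoord.target = Ioi (0:ℝ) ×ˢ Ioo (-π) π := rfl
    rw [hset]
    have congrr : ∀ p ∈ Ioi (0:ℝ) ×ˢ Ioo (-π) π,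
        p.1 • ((fun q : ℝ × ℝ => (q.1 ^ k * Real.exp (-q.1 ^ 2)) *
          (|q.2| ^ (n-2) * Real.exp (-q.2 ^ 2))) (polarCoord.symm p)) =
        (p.1 ^ (n-1+k) * Real.exp (-p.1 ^ 2)) *
          ((Real.cos p.2) ^ k * |Real.sin p.2| ^ (n-2)) := by
      rintro ⟨r, θ⟩ ⟨hr, -⟩
      have hr' : (0:ℝ) < r := hr
      simp only [polarCoord_symm_apply, smul_eq_mul]
      have h1 : (r * Real.cos θ) ^ 2 + (r * Real.sin θ) ^ 2 = r ^ 2 := by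
        have := Real.sin_sq_add_cos_sq θ; nlinarith [this]
      have h2 : |r * Real.sin θ| = r * |Real.sin θ| := by
        rw [abs_mul, abs_of_pos hr']
      have h3 : Real.exp (-(r * Real.cos θ) ^ 2) * Real.exp (-(r * Real.sin θ) ^ 2)
          = Real.exp (-r ^ 2) := by
        rw [← Real.exp_add, ← h1]; ring_nf
      have hnk : n - 1 + k = k + (n - 2) + 1 := by omega
      have key : r * ((r * Real.cos θ) ^ k * Real.exp (-(r * Real.cos θ) ^ 2) *
          (|r * Real.sin θ| ^ (n-2) * Real.exp (-(r * Real.sin θ) ^ 2))) =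
          (r ^ k * r ^ (n-2) * r) * ((Real.cos θ) ^ k * |Real.sin θ| ^ (n-2)) *
            (Real.exp (-(r * Real.cos θ) ^ 2) * Real.exp (-(r * Real.sin θ) ^ 2)) := by
        rw [h2]; ring
      rw [key, h3, hnk, pow_add, pow_add, pow_one]; ring
    rw [setIntegral_congr_fun (measurableSet_Ioi.prod measurableSet_Ioo) congrr]
    rw [Measure.volume_eq_prod, ← Measure.prod_restrict,
      integral_prod_mul (f := fun r : ℝ => r ^ (n-1+k) * Real.exp (-r ^ 2))
        (g := fun θ : ℝ => (Real.cos θ) ^ k * |Real.sin θ| ^ (n-2)), gaussJ]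
    congr 2
    rw [Nat.cast_add, Nat.cast_sub (by omega)]
    push_cast
    ring
  -- step 3 : the angular integral equals 2 * j
  have hg : Continuous (fun θ : ℝ => (Real.cos θ) ^ k * |Real.sin θ| ^ (n-2)) :=
    (Real.continuous_cos.pow k).mul ((Real.continuous_sin.abs).pow (n-2))
  have half : ∫ θ in (0:ℝ)..π, (Real.cos θ) ^ k * |Real.sin θ| ^ (n-2) = j := by
    have subst := intervalIntegral.integral_comp_smul_deriv (a := (0:ℝ)) (b := π)
      (f := Real.cos) (f' := fun θ => -Real.sin θ) (g := F)
      (fun θ _ => Real.hasDerivAt_cos θ) (Real.continuous_sin.neg.continuousOn) hFc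
    rw [Real.cos_zero, Real.cos_pi] at subst
    simp only [Function.comp_def] at subst
    have congr2 : ∀ θ ∈ uIcc (0:ℝ) π, (Real.cos θ) ^ k * |Real.sin θ| ^ (n-2) =
        -((-Real.sin θ) • F (Real.cos θ)) := by
      intro θ hθ
      rw [uIcc_of_le Real.pi_pos.le] at hθ
      have hs : 0 ≤ Real.sin θ := Real.sin_nonneg_of_nonneg_of_le_pi hθ.1 hθ.2
      have habs : |Real.sin θ| = Real.sin θ := abs_of_nonneg hs
      have hpow : (Real.sin θ) ^ (n-2) = (1 - (Real.cos θ) ^ 2) ^ β * Real.sin θ := by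
        have h1 : 1 - (Real.cos θ) ^ 2 = (Real.sin θ) ^ 2 := by
          have := Real.sin_sq_add_cos_sq θ; linarith
        have h2 : ((Real.sin θ) ^ (2:ℕ)) ^ β = (Real.sin θ) ^ ((n:ℝ) - 3) := by
          rw [← Real.rpow_natCast (Real.sin θ) 2, ← Real.rpow_mul hs]
          norm_num [hβdef]
          congr 1
          ring
        have h3 : (Real.sin θ) ^ ((n:ℝ) - 3) = (Real.sin θ) ^ (n - 3 : ℕ) := by
          rw [← Real.rpow_natCast (Real.sin θ) (n-3), Nat.cast_sub (by omega)]
          norm_num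
        rw [h1, h2, h3, ← pow_succ]
        congr 1
        omega
      rw [habs, hpow, hF]
      simp only [smul_eq_mul]
      ring
    rw [intervalIntegral.integral_congr congr2, intervalIntegral.integral_neg, subst,
      intervalIntegral.integral_symm, hj]
    ring
  have evenpart : ∫ θ in (-π:ℝ)..0, (Real.cos θ) ^ k * |Real.sin θ| ^ (n-2) = j := by
    have hneg := intervalIntegral.integral_comp_neg (a := (0:ℝ)) (b := π)
      (fun θ => (Real.cos θ) ^ k * |Real.sin θ| ^ (n-2))
    simp only [Real.cos_neg, Real.sin_neg, abs_neg, neg_zero] at hneg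
    rw [← hneg, half]
  have wsplit : ∫ θ in Ioo (-π:ℝ) π, (Real.cos θ) ^ k * |Real.sin θ| ^ (n-2) = 2 * j := by
    rw [← MeasureTheory.integral_Ioc_eq_integral_Ioo,
      ← intervalIntegral.integral_of_le (by linarith [Real.pi_pos] : (-π:ℝ) ≤ π),
      ← intervalIntegral.integral_add_adjacent_intervals (a := (-π:ℝ)) (b := 0) (c := π)
        (hg.intervalIntegrable _ _) (hg.intervalIntegrable _ _), half, evenpart]
    ring
  -- step 4 : combine
  have hΓ : Real.Gamma (((n:ℝ) + k) / 2) ≠ 0 := by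
    have : 0 < Real.Gamma (((n:ℝ) + k) / 2) := Real.Gamma_pos_of_pos (by positivity)
    exact this.ne'
  have main := fub.symm.trans pol
  rw [wsplit] at main
  rw [hj] at *
  field_simp at main ⊢
  linarith [main]

variable {n : ℕ}

local notation "E" => EuclideanSpace ℝ (Fin n)

lemma integral_polar (hn : 1 ≤ n) (g : E → ℝ) :
    ∫ z : E, g z = ∫ p : sphere (0:E) 1 × Ioi (0:ℝ),
      g (p.2.1 • p.1.1) ∂((volume : Measure E).toSphere.prod
        (Measure.volumeIoiPow (n - 1))) := by
  haveI : Nonempty (Fin n) := ⟨⟨0, by omega⟩⟩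
  haveI : Nontrivial E := inferInstance
  have hdim : Module.finrank ℝ E = n := finrank_euclideanSpace_fin
  have step := (volume : Measure E).measurePreserving_homeomorphUnitSphereProd.integral_comp
    (Homeomorph.measurableEmbedding _)
    (fun p => g ((homeomorphUnitSphereProd E).symm p).1)
  calc ∫ z : E, g z
      = ∫ x : ({(0:E)}ᶜ : Set E), g x.1 ∂((volume : Measure E).comap Subtype.val) := by
        rw [integral_subtype_comap (measurableSet_singleton _).compl fun x => g x,
          restrict_compl_singleton]
    _ = ∫ x : ({(0:E)}ᶜ : Set E),
          (fun p => g ((homeomorphUnitSphereProd E).symm p).1) (homeomorphUnitSphereProd E x)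
            ∂((volume : Measure E).comap Subtype.val) := by
        simp
    _ = ∫ p : sphere (0:E) 1 × Ioi (0:ℝ),
          g ((homeomorphUnitSphereProd E).symm p).1
            ∂((volume : Measure E).toSphere.prod (Measure.volumeIoiPow (Module.finrank ℝ E - 1))) :=
        step
    _ = _ := by
        rw [hdim]
        apply integral_congr_ae
        filter_upwards with p
        simp

lemma integral_volumeIoiPow (m : ℕ) (φ : ℝ → ℝ) :
    ∫ r : Ioi (0:ℝ), φ r.1 ∂(Measure.volumeIoiPow m) = ∫ r in Ioi (0:ℝ), r ^ m * φ r := by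
  simp only [Measure.volumeIoiPow, ENNReal.ofReal]
  rw [integral_withDensity_eq_integral_smul
    ((measurable_subtype_coe.pow_const _).real_toNNReal) (fun r => φ r.1),
    integral_subtype_comap measurableSet_Ioi (fun a => Real.toNNReal (a ^ m) • φ a),
    setIntegral_congr_fun measurableSet_Ioi (fun x hx => ?_)]
  rw [NNReal.smul_def, Real.coe_toNNReal _ (pow_nonneg hx.out.le _), smul_eq_mul]

lemma gauss_eq_sphere_mul (hn : 3 ≤ n) (x : E) (k : ℕ) :
    ∫ z : E, (inner ℝ x z : ℝ) ^ k * Real.exp (-‖z‖ ^ 2) =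
      (∫ ω : sphere (0:E) 1, (inner ℝ x (ω:E) : ℝ) ^ k ∂(volume : Measure E).toSphere) *
        (Real.Gamma (((n:ℝ) + k) / 2) / 2) := by
  rw [integral_polar (by omega) (fun z => (inner ℝ x z : ℝ) ^ k * Real.exp (-‖z‖ ^ 2))]
  have congruence : ∀ p : sphere (0:E) 1 × Ioi (0:ℝ),
      (inner ℝ x (p.2.1 • p.1.1) : ℝ) ^ k * Real.exp (-‖p.2.1 • p.1.1‖ ^ 2) =
      (fun ω : sphere (0:E) 1 => (inner ℝ x (ω:E) : ℝ) ^ k) p.1 *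
        (fun r : Ioi (0:ℝ) => r.1 ^ k * Real.exp (-r.1 ^ 2)) p.2 := by
    rintro ⟨ω, r⟩
    have hω : ‖(ω : E)‖ = 1 := mem_sphere_zero_iff_norm.mp ω.2
    have hr : (0:ℝ) < r.1 := r.2
    simp only [real_inner_smul_right, norm_smul, hω, mul_one, Real.norm_eq_abs,
      abs_of_pos hr, mul_pow]
    ring
  simp_rw [congruence]
  rw [integral_prod_mul (f := fun ω : sphere (0:E) 1 => (inner ℝ x (ω:E) : ℝ) ^ k)
    (g := fun r : Ioi (0:ℝ) => r.1 ^ k * Real.exp (-r.1 ^ 2)),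
    integral_volumeIoiPow (n-1) (fun r => r ^ k * Real.exp (-r ^ 2))]
  congr 1
  have : ∫ r in Ioi (0:ℝ), r ^ (n-1) * (r ^ k * Real.exp (-r ^ 2)) =
      ∫ r in Ioi (0:ℝ), r ^ (n-1+k) * Real.exp (-r ^ 2) := by
    refine setIntegral_congr_fun measurableSet_Ioi fun r _ => ?_
    rw [pow_add]; ring
  rw [this, gaussJ]
  congr 2
  rw [Nat.cast_add, Nat.cast_sub (by omega)]
  push_cast
  ring

lemma gauss_eq_M (hn : 3 ≤ n) (x : E) (hx : ‖x‖ = 1) (k : ℕ) :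
    ∫ z : E, (inner ℝ x z : ℝ) ^ k * Real.exp (-‖z‖ ^ 2) =
      (∫ t : ℝ, t ^ k * Real.exp (-t ^ 2)) * Real.sqrt π ^ (n - 1) := by
  set i0 : Fin n := ⟨0, by omega⟩ with hi0
  -- orthonormal basis with b i0 = x
  obtain ⟨b, hb⟩ : ∃ b : OrthonormalBasis (Fin n) ℝ E, ∀ i ∈ ({i0} : Set (Fin n)),
      b i = (fun _ => x) i := by
    refine Orthonormal.exists_orthonormalBasis_extension_of_card_eq
      (by simp [finrank_euclideanSpace_fin]) ?_
    constructor
    · intro i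
      simp [hx]
    · intro i j hij
      exact absurd (Subtype.ext (i.2.out.trans j.2.out.symm)) hij
  have hb0 : b i0 = x := hb i0 rfl
  have mp : MeasurePreserving (b.repr.symm) (volume : Measure E) (volume : Measure E) :=
    b.measurePreserving_repr_symm
  have step1 : ∫ z : E, (inner ℝ x z : ℝ) ^ k * Real.exp (-‖z‖ ^ 2) =
      ∫ w : E, (w i0) ^ k * Real.exp (-‖w‖ ^ 2) := by
    rw [← mp.integral_comp b.repr.symm.toHomeomorph.measurableEmbedding
      (fun z => (inner ℝ x z : ℝ) ^ k * Real.exp (-‖z‖ ^ 2))]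
    refine integral_congr_ae (Filter.Eventually.of_forall fun w => ?_)
    have h1 : (inner ℝ x (b.repr.symm w) : ℝ) = w i0 := by
      calc (inner ℝ x (b.repr.symm w) : ℝ)
          = (inner ℝ (b.repr x) (b.repr (b.repr.symm w)) : ℝ) := (b.repr.inner_map_map x _).symm
        _ = (inner ℝ (EuclideanSpace.single i0 (1:ℝ)) w : ℝ) := by
            rw [LinearIsometryEquiv.apply_symm_apply, ← hb0, b.repr_self]
        _ = w i0 := by
            rw [EuclideanSpace.inner_single_left]
            simp
    simp only [LinearIsometryEquiv.norm_map, h1]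
  rw [step1]
  -- move to the product measure on (Fin n → ℝ)
  have mp2 := (EuclideanSpace.volume_preserving_symm_measurableEquiv_toLp (Fin n)).symm
  rw [← mp2.integral_comp (MeasurableEquiv.measurableEmbedding _)
    (fun w : E => (w i0) ^ k * Real.exp (-‖w‖ ^ 2))]
  have hnorm : ∀ y : Fin n → ℝ,
      (((MeasurableEquiv.toLp 2 (Fin n → ℝ)).symm).symm y : E) i0 = y i0 := fun y => rfl
  have hnorm2 : ∀ y : Fin n → ℝ,
      ‖(((MeasurableEquiv.toLp 2 (Fin n → ℝ)).symm).symm y : E)‖ ^ 2 = ∑ i, (y i) ^ 2 := by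
    intro y
    rw [EuclideanSpace.norm_eq, Real.sq_sqrt (by positivity)]
    simp only [Real.norm_eq_abs, sq_abs]
    rfl
  calc ∫ y : Fin n → ℝ, ((((MeasurableEquiv.toLp 2 (Fin n → ℝ)).symm).symm y : E) i0) ^ k *
        Real.exp (-‖(((MeasurableEquiv.toLp 2 (Fin n → ℝ)).symm).symm y : E)‖ ^ 2)
      = ∫ y : Fin n → ℝ, ∏ i, (fun i t => (if i = i0 then t ^ k else 1) * Real.exp (-t ^ 2))
          i (y i) := by
        refine integral_congr_ae (Filter.Eventually.of_forall fun y => ?_)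
        have h2 := hnorm2 y
        dsimp only
        rw [h2, Finset.prod_mul_distrib, Finset.prod_ite_eq', ← Real.exp_sum]
        simp only [Finset.mem_univ, if_true]
        have h3 : (((MeasurableEquiv.toLp 2 (Fin n → ℝ)).symm).symm y : E) i0 = y i0 := rfl
        rw [h3]
        congr 1
        simp [Finset.sum_neg_distrib]
    _ = ∏ i, ∫ t : ℝ, (if i = i0 then t ^ k else 1) * Real.exp (-t ^ 2) :=
        MeasureTheory.integral_fintype_prod_eq_prod
          (fun i t => (if i = i0 then t ^ k else 1) * Real.exp (-t ^ 2))
    _ = (∫ t : ℝ, t ^ k * Real.exp (-t ^ 2)) * Real.sqrt π ^ (n - 1) := by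
        rw [← Finset.mul_prod_erase Finset.univ _ (Finset.mem_univ i0)]
        simp only [if_pos rfl]
        congr 1
        have : ∀ i ∈ Finset.univ.erase i0,
            (∫ t : ℝ, (if i = i0 then t ^ k else 1) * Real.exp (-t ^ 2)) = Real.sqrt π := by
          intro i hi
          simp only [if_neg (Finset.mem_erase.mp hi).1, one_mul]
          have := integral_gaussian 1
          simp only [one_mul, div_one] at this
          rw [← this]
          refine integral_congr_ae (Filter.Eventually.of_forall fun t => ?_)
          norm_num
        rw [Finset.prod_congr rfl this, Finset.prod_const, Finset.card_erase_of_mem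
          (Finset.mem_univ i0), Finset.card_univ, Fintype.card_fin]

lemma toSphere_univ_mul (hn : 3 ≤ n) :
    (((volume : Measure E).toSphere Set.univ).toReal) * (Real.Gamma ((n:ℝ)/2) / 2) =
      Real.sqrt π ^ n := by
  set x : E := EuclideanSpace.single ⟨0, by omega⟩ (1:ℝ) with hxdef
  have hx : ‖x‖ = 1 := by rw [hxdef, EuclideanSpace.norm_single, norm_one]
  have h1 := (gauss_eq_sphere_mul hn x 0).symm.trans (gauss_eq_M hn x hx 0)
  simp only [pow_zero, one_mul, Nat.cast_zero, add_zero] at h1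
  have hM0 : (∫ t : ℝ, Real.exp (-t ^ 2)) = Real.sqrt π := by
    have := integral_gaussian 1
    simp only [neg_mul, one_mul, div_one] at this
    exact this
  rw [hM0] at h1
  have hconst : (∫ ω : sphere (0:E) 1, (1:ℝ) ∂(volume : Measure E).toSphere) =
      (((volume : Measure E).toSphere Set.univ).toReal) := by
    rw [integral_const, smul_eq_mul, mul_one]
    rfl
  rw [hconst] at h1
  rw [h1, ← pow_succ']
  congr 1
  omega

lemma sphere_moment (hn : 3 ≤ n) (x : E) (hx : ‖x‖ = 1) (k : ℕ) :
    ∫ ω : sphere (0:E) 1, (inner ℝ x (ω:E) : ℝ) ^ k ∂(normSphereMeasure n) =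
      Real.Gamma ((n:ℝ)/2) * (∫ t : ℝ, t ^ k * Real.exp (-t ^ 2)) /
        (Real.sqrt π * Real.Gamma (((n:ℝ) + k) / 2)) := by
  have hks := (gauss_eq_sphere_mul hn x k).symm.trans (gauss_eq_M hn x hx k)
  have h0 := toSphere_univ_mul (n := n) hn
  set ν := (volume : Measure E).toSphere with hν
  set V : ℝ := (ν Set.univ).toReal with hV
  have hΓn : 0 < Real.Gamma ((n:ℝ)/2) := Real.Gamma_pos_of_pos (by positivity)
  have hΓnk : 0 < Real.Gamma (((n:ℝ)+k)/2) := Real.Gamma_pos_of_pos (by positivity)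
  have hπ : 0 < Real.sqrt π := Real.sqrt_pos.mpr Real.pi_pos
  have hVpos : 0 < V := by
    nlinarith [pow_pos hπ n, h0, hΓn]
  have hsmul : ∫ ω : sphere (0:E) 1, (inner ℝ x (ω:E) : ℝ) ^ k ∂(normSphereMeasure n) =
      V⁻¹ * ∫ ω : sphere (0:E) 1, (inner ℝ x (ω:E) : ℝ) ^ k ∂ν := by
    rw [normSphereMeasure, integral_smul_measure, smul_eq_mul, ENNReal.toReal_inv]
  rw [hsmul]
  have hnu : (∫ ω : sphere (0:E) 1, (inner ℝ x (ω:E) : ℝ) ^ k ∂ν) =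
      (∫ t : ℝ, t ^ k * Real.exp (-t ^ 2)) * Real.sqrt π ^ (n-1) * 2 /
        Real.Gamma (((n:ℝ)+k)/2) := by
    field_simp at hks ⊢
    linarith [hks]
  rw [hnu]
  have hsq : Real.sqrt π ^ n = Real.sqrt π * Real.sqrt π ^ (n-1) := by
    rw [← pow_succ']
    congr 1
    omega
  rw [hsq] at h0
  field_simp
  first
  | linear_combination (2 * (∫ t : ℝ, t ^ k * Real.exp (-t ^ 2)) *
      Real.Gamma (((n:ℝ)+k)/2)) * h0
  | linear_combination (-2 * (∫ t : ℝ, t ^ k * Real.exp (-t ^ 2))) * h0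

lemma monomial_combined (hn : 3 ≤ n) (x : E) (hx : ‖x‖ = 1) (k : ℕ) :
    ∫ ω : sphere (0:E) 1, (inner ℝ x (ω:E) : ℝ) ^ k ∂(normSphereMeasure n) =
      (Real.Gamma ((n:ℝ) / 2) / (Real.sqrt Real.pi * Real.Gamma (((n:ℝ) - 1) / 2))) *
        ∫ t in (-1:ℝ)..1, t ^ k * (1 - t ^ 2) ^ (((n:ℝ) - 3) / 2) := by
  rw [sphere_moment hn x hx k, intervalMoment n k hn]
  have hΓ1 : 0 < Real.Gamma (((n:ℝ) - 1)/2) := Real.Gamma_pos_of_pos (by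
    have : (3:ℝ) ≤ n := by exact_mod_cast hn
    linarith)
  have hΓnk : 0 < Real.Gamma (((n:ℝ)+k)/2) := Real.Gamma_pos_of_pos (by positivity)
  have hπ : 0 < Real.sqrt π := Real.sqrt_pos.mpr Real.pi_pos
  field_simp

end Aux
section Key

open Set Metric Real

variable {n : ℕ}

local notation "E" => EuclideanSpace ℝ (Fin n)

lemma normSphere_finite (hn : 3 ≤ n) : IsFiniteMeasure (normSphereMeasure n) := by
  constructor
  rw [normSphereMeasure, Measure.smul_apply, smul_eq_mul]
  rcases eq_or_ne ((volume : Measure E).toSphere Set.univ) 0 with h | h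
  · simp [h]
  · haveI : Nonempty (Fin n) := ⟨⟨0, by omega⟩⟩
    have hfin : (volume : Measure E).toSphere Set.univ ≠ ⊤ := measure_ne_top _ _
    rw [ENNReal.inv_mul_cancel h hfin]
    exact ENNReal.one_lt_top

lemma key_integral (hn : 3 ≤ n) (x : E) (hx : ‖x‖ = 1) (f : Polynomial ℝ) :
    ∫ ω : sphere (0:E) 1, Polynomial.eval (inner ℝ x (ω:E) : ℝ) f ∂(normSphereMeasure n) =
      gegenbauerZero n f := by
  haveI := normSphere_finite (n := n) hn
  have hβ : 0 ≤ ((n:ℝ) - 3) / 2 := by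
    have : (3:ℝ) ≤ n := by exact_mod_cast hn
    linarith
  set N := f.natDegree + 1 with hN
  have heval : ∀ t : ℝ, f.eval t = ∑ i ∈ Finset.range N, f.coeff i * t ^ i := by
    intro t
    exact f.eval_eq_sum_range t
  have hContInner : Continuous (fun ω : sphere (0:E) 1 => (inner ℝ x (ω:E) : ℝ)) :=
    Continuous.inner continuous_const continuous_subtype_val
  have hIntegrable : ∀ i : ℕ, Integrable
      (fun ω : sphere (0:E) 1 => f.coeff i * (inner ℝ x (ω:E) : ℝ) ^ i)
      (normSphereMeasure n) := by
    intro i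
    have hc : Continuous (fun ω : sphere (0:E) 1 => f.coeff i * (inner ℝ x (ω:E) : ℝ) ^ i) :=
      continuous_const.mul (hContInner.pow i)
    exact hc.integrable_of_hasCompactSupport (HasCompactSupport.of_compactSpace _)
  calc ∫ ω : sphere (0:E) 1, Polynomial.eval (inner ℝ x (ω:E) : ℝ) f ∂(normSphereMeasure n)
      = ∫ ω : sphere (0:E) 1, ∑ i ∈ Finset.range N,
          f.coeff i * (inner ℝ x (ω:E) : ℝ) ^ i ∂(normSphereMeasure n) := by
        refine integral_congr_ae (Filter.Eventually.of_forall fun ω => ?_)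
        exact heval _
    _ = ∑ i ∈ Finset.range N, ∫ ω : sphere (0:E) 1,
          f.coeff i * (inner ℝ x (ω:E) : ℝ) ^ i ∂(normSphereMeasure n) :=
        integral_finset_sum _ (fun i _ => hIntegrable i)
    _ = ∑ i ∈ Finset.range N, f.coeff i *
          ((Real.Gamma ((n:ℝ) / 2) / (Real.sqrt Real.pi * Real.Gamma (((n:ℝ) - 1) / 2))) *
            ∫ t in (-1:ℝ)..1, t ^ i * (1 - t ^ 2) ^ (((n:ℝ) - 3) / 2)) := by
        refine Finset.sum_congr rfl fun i _ => ?_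
        rw [integral_const_mul, monomial_combined hn x hx i]
    _ = gegenbauerZero n f := by
        rw [gegenbauerZero]
        have : ∫ t in (-1:ℝ)..1, f.eval t * (1 - t ^ 2) ^ (((n:ℝ) - 3) / 2) =
            ∑ i ∈ Finset.range N, f.coeff i *
              ∫ t in (-1:ℝ)..1, t ^ i * (1 - t ^ 2) ^ (((n:ℝ) - 3) / 2) := by
          calc ∫ t in (-1:ℝ)..1, f.eval t * (1 - t ^ 2) ^ (((n:ℝ) - 3) / 2)
              = ∫ t in (-1:ℝ)..1, ∑ i ∈ Finset.range N,
                  f.coeff i * (t ^ i * (1 - t ^ 2) ^ (((n:ℝ) - 3) / 2)) := by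
                refine intervalIntegral.integral_congr fun t _ => ?_
                rw [heval t, Finset.sum_mul]
                exact Finset.sum_congr rfl fun i _ => by ring
            _ = ∑ i ∈ Finset.range N, ∫ t in (-1:ℝ)..1,
                  f.coeff i * (t ^ i * (1 - t ^ 2) ^ (((n:ℝ) - 3) / 2)) :=
                intervalIntegral.integral_finset_sum (fun i _ =>
                  ((continuous_const.mul (contF i hβ)).intervalIntegrable _ _))
            _ = ∑ i ∈ Finset.range N, f.coeff i *
                  ∫ t in (-1:ℝ)..1, t ^ i * (1 - t ^ 2) ^ (((n:ℝ) - 3) / 2) :=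
                Finset.sum_congr rfl fun i _ => intervalIntegral.integral_const_mul _ _
        rw [this, Finset.mul_sum]
        exact Finset.sum_congr rfl fun i _ => by ring

end Key

theorem lower_LP_bound_for_designs (n τ : ℕ) (hn : 3 ≤ n) (hτ : 1 ≤ τ)
    (T : Set ℝ) (hT : T ⊆ Set.Ico (-1 : ℝ) 1)
    (h : ℝ → ℝ) (f : Polynomial ℝ) (hdeg : f.natDegree ≤ τ)
    (hfh : ∀ t ∈ Set.Icc (-1 : ℝ) 1 \ T, f.eval t ≤ h t)
    (C : Finset (EuclideanSpace ℝ (Fin n)))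
    (hCsphere : ∀ x ∈ C, ‖x‖ = 1) (hCcard : 2 ≤ C.card)
    (hCavoid : ∀ x ∈ C, ∀ y ∈ C, x ≠ y → (inner ℝ x y : ℝ) ∉ T)
    (hCdesign : IsSphericalDesign n τ C) :
    energy n h C ≥ gegenbauerZero n f * C.card - f.eval 1 := by
  set g0 := gegenbauerZero n f with hg0
  have hc : (0:ℝ) < (C.card : ℝ) := by
    have : 0 < C.card := by omega
    exact_mod_cast this
  have hinner : ∀ x y : EuclideanSpace ℝ (Fin n), (inner ℝ x y : ℝ) = ∑ i, x i * y i := by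
    intro x y
    rw [PiLp.inner_apply]
    simp [RCLike.inner_apply, conj_trivial]
    exact Finset.sum_congr rfl fun i _ => mul_comm _ _
  -- per-point design identity
  have hdesign : ∀ x ∈ C, ∑ y ∈ C, f.eval (inner ℝ x y : ℝ) = (C.card : ℝ) * g0 := by
    intro x hx
    set L : MvPolynomial (Fin n) ℝ := ∑ i, MvPolynomial.C (x i) * MvPolynomial.X i with hL
    set p : MvPolynomial (Fin n) ℝ := Polynomial.aeval L f with hp
    have hEval : ∀ v : Fin n → ℝ, MvPolynomial.eval v p = f.eval (∑ i, x i * v i) := by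
      intro v
      have h1 : MvPolynomial.eval v p = MvPolynomial.aeval v p := by
        rw [← MvPolynomial.coe_aeval_eq_eval]; rfl
      rw [h1, hp, ← Polynomial.aeval_algHom_apply (MvPolynomial.aeval v)]
      have h2 : (MvPolynomial.aeval v) L = ∑ i, x i * v i := by
        simp [hL, MvPolynomial.aeval_def]
      rw [h2, Polynomial.aeval_def, Algebra.algebraMap_self]
      rfl
    have hdegp : p.totalDegree ≤ τ := by
      have hLdeg : L.totalDegree ≤ 1 := by
        refine le_trans (MvPolynomial.totalDegree_finset_sum _ _) ?_
        refine Finset.sup_le fun i _ => ?_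
        refine le_trans (MvPolynomial.totalDegree_mul _ _) ?_
        simp [MvPolynomial.totalDegree_C, MvPolynomial.totalDegree_X]
      rw [hp, Polynomial.aeval_eq_sum_range]
      refine le_trans (MvPolynomial.totalDegree_finset_sum _ _) ?_
      refine Finset.sup_le fun i hi => ?_
      refine le_trans (MvPolynomial.totalDegree_smul_le _ _) ?_
      refine le_trans (MvPolynomial.totalDegree_pow _ _) ?_
      have hiN : i ≤ f.natDegree := by
        have := Finset.mem_range.mp hi; omega
      calc i * L.totalDegree ≤ i * 1 := Nat.mul_le_mul_left i hLdeg
        _ = i := Nat.mul_one i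
        _ ≤ τ := le_trans hiN hdeg
    have hD := hCdesign p hdegp
    have hLside : ∑ y ∈ C, MvPolynomial.eval (fun i => y i) p =
        ∑ y ∈ C, f.eval (inner ℝ x y : ℝ) := by
      refine Finset.sum_congr rfl fun y _ => ?_
      rw [hEval (fun i => y i), hinner x y]
    have hRside : (∫ z, MvPolynomial.eval (fun i => (z : EuclideanSpace ℝ (Fin n)) i) p
        ∂(normSphereMeasure n)) = g0 := by
      have : ∀ z : Metric.sphere (0 : EuclideanSpace ℝ (Fin n)) 1,
          MvPolynomial.eval (fun i => (z : EuclideanSpace ℝ (Fin n)) i) p =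
            f.eval (inner ℝ x (z : EuclideanSpace ℝ (Fin n)) : ℝ) := by
        intro z
        rw [hEval, hinner x (z : EuclideanSpace ℝ (Fin n))]
      rw [integral_congr_ae (Filter.Eventually.of_forall this)]
      exact key_integral hn x (hCsphere x hx) f
    rw [hLside, hRside] at hD
    calc ∑ y ∈ C, f.eval (inner ℝ x y : ℝ)
        = (C.card : ℝ) * ((1/(C.card:ℝ)) * ∑ y ∈ C, f.eval (inner ℝ x y : ℝ)) := by
          field_simp
      _ = (C.card : ℝ) * g0 := by rw [hD]
  -- diagonal values
  have hdiag : ∀ x ∈ C, f.eval (inner ℝ x x : ℝ) = f.eval 1 := by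
    intro x hx
    have : (inner ℝ x x : ℝ) = 1 := by
      rw [real_inner_self_eq_norm_sq, hCsphere x hx]; norm_num
    rw [this]
  -- energy comparison
  have hmono : (1/(C.card:ℝ)) * ∑ x ∈ C, ∑ y ∈ C,
      (if x ≠ y then f.eval (inner ℝ x y : ℝ) else 0) ≤ energy n h C := by
    rw [energy]
    refine mul_le_mul_of_nonneg_left ?_ (by positivity)
    refine Finset.sum_le_sum fun x hx => Finset.sum_le_sum fun y hy => ?_
    by_cases hxy : x = y
    · simp [hxy]
    · simp only [ne_eq, hxy, not_false_eq_true, if_true]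
      refine hfh _ ⟨?_, hCavoid x hx y hy hxy⟩
      have habs : |(inner ℝ x y : ℝ)| ≤ 1 := by
        have := abs_real_inner_le_norm x y
        rw [hCsphere x hx, hCsphere y hy] at this
        simpa using this
      exact abs_le.mp habs
  -- value of the f-energy
  have hcalc : (1/(C.card:ℝ)) * ∑ x ∈ C, ∑ y ∈ C,
      (if x ≠ y then f.eval (inner ℝ x y : ℝ) else 0) = g0 * C.card - f.eval 1 := by
    have inner_sum : ∀ x ∈ C, ∑ y ∈ C, (if x ≠ y then f.eval (inner ℝ x y : ℝ) else 0) =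
        (C.card : ℝ) * g0 - f.eval 1 := by
      intro x hx
      have step : ∑ y ∈ C, (if x ≠ y then f.eval (inner ℝ x y : ℝ) else 0) =
          (∑ y ∈ C, f.eval (inner ℝ x y : ℝ)) -
            ∑ y ∈ C, (if x = y then f.eval (inner ℝ x y : ℝ) else 0) := by
        rw [← Finset.sum_sub_distrib]
        refine Finset.sum_congr rfl fun y _ => ?_
        by_cases hxy : x = y <;> simp [hxy]
      rw [step, Finset.sum_ite_eq C x (fun y => f.eval (inner ℝ x y : ℝ)), if_pos hx,
        hdesign x hx, hdiag x hx]
    rw [Finset.sum_congr rfl inner_sum, Finset.sum_const, nsmul_eq_mul]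
    field_simp
  calc gegenbauerZero n f * C.card - f.eval 1
      = (1/(C.card:ℝ)) * ∑ x ∈ C, ∑ y ∈ C,
          (if x ≠ y then f.eval (inner ℝ x y : ℝ) else 0) := by rw [hcalc]
    _ ≤ energy n h C := hmono
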